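/- Let a > b > 0 with a² > 2b², c² = a² − b². Each midpoint M of a segment of the self-intersected 4-periodic (as parametrized by u with |u| ≤ (a/c²)√(a²−2b²)) satisfies the quartic equation c²(b²x² + a²y²)² − b⁴a²((a² − 2b²)x² − a²y²) = 0, where M = (x, y). -/

import Mathlib

private lemma key (a b c u s w e x y : ℝ) (hs : s ≠ 0) (hc : c ≠ 0)
    (hs2 : s^2 = 1 - u^2) (hw2 : w^2 = a^2*(a^2-2*b^2) - c^4*u^2)
    (hc2 : c^2 = a^2 - b^2) (he : e^2 = 1)
    (hx : x = (e*(a*u) + (a/(c^2*s))*w)/2)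
    (hy : y = (b*s + -(b^3/(c^2*s)))/2) :
    c^2*(b^2*x^2 + a^2*y^2)^2 - b^4*a^2*((a^2 - 2*b^2)*x^2 - a^2*y^2) = 0 := by
  subst hx hy
  field_simp
  linear_combination ((-4)*a^4*b^4*c^6*u^5*s*w*e + 4*a^4*b^4*c^6*u^3*s*w*e + (-2)*a^4*b^8*c^4*u^4 + 2*a^4*b^8*c^4*u^2 + (-6)*a^8*b^4*c^4*u^4 + 6*a^8*b^4*c^4*u^2 + 12*a^6*b^6*c^4*u^4 + (-12)*a^6*b^6*c^4*u^2 + 10*a^4*b^4*c^8*u^6 + (-11)*a^4*b^4*c^8*u^4 + 1*a^4*b^4*c^8*u^8*e^2 + (-2)*a^4*b^4*c^8*u^6*e^2 + 1*a^4*b^4*c^8*u^4*e^2 + 4*a^4*b^6*c^6*u^6 + (-8)*a^4*b^6*c^6*u^4 + 4*a^4*b^6*c^6*u^2 + (-4)*a^6*b^4*c^6*u^6 + 8*a^6*b^4*c^6*u^4 + (-4)*a^6*b^4*c^6*u^2 + (-1)*a^4*b^4*c^8*u^8 + 2*a^4*b^4*c^8*u^2) * he + (1*a^4*b^4*c^8*u^4*s^2*e^4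 + 4*a^4*b^4*c^6*u^3*s*w*e^3 + 2*a^4*b^4*c^8*u^2*s^4*e^2 + 4*a^4*b^6*c^6*u^2*s^2*e^2 + 2*a^4*b^8*c^4*u^2*e^2 + 4*a^4*b^4*c^6*u*s^3*w*e + 8*a^4*b^6*c^4*u*s*w*e + 1*a^4*b^4*c^8*s^6 + (-2)*a^4*b^8*c^4*s^2 + (-4)*a^6*b^4*c^6*u^2*s^2*e^2 + (-8)*a^6*b^4*c^4*u*s*w*e + 6*a^8*b^4*c^4*u^2*e^2 + (-12)*a^6*b^6*c^4*u^2*e^2 + (-10)*a^4*b^4*c^8*u^4*e^2 + 2*a^8*b^4*c^4*s^2 + (-4)*a^6*b^6*c^4*s^2 + (-4)*a^4*b^4*c^8*u^2*s^2 + 12*a^8*b^6*c^2 + (-8)*a^6*b^8*c^2 + (-4)*a^4*b^6*c^6*u^2 + (-4)*a^10*b^4*c^2 + 4*a^6*b^4*c^6*u^2 + (-1)*a^4*b^4*c^8*u^6*e^4 + 1*a^4*b^4*c^8*u^4*e^4 + (-2)*a^4*b^4*c^8*u^4*s^2*e^2 + 2*a^4*b^4*c^8*u^2*s^2*e^2 +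 (-4)*a^4*b^6*c^6*u^4*e^2 + 4*a^4*b^6*c^6*u^2*e^2 + (-4)*a^4*b^4*c^6*u^3*s*w*e + 4*a^4*b^4*c^6*u*s*w*e + (-1)*a^4*b^4*c^8*u^2*s^4 + 1*a^4*b^4*c^8*s^4 + 2*a^4*b^8*c^4*u^2 + (-2)*a^4*b^8*c^4 + 4*a^6*b^4*c^6*u^4*e^2 + (-4)*a^6*b^4*c^6*u^2*e^2 + (-2)*a^8*b^4*c^4*u^2 + 2*a^8*b^4*c^4 + 4*a^6*b^6*c^4*u^2 + (-4)*a^6*b^6*c^4 + 5*a^4*b^4*c^8*u^4 + (-5)*a^4*b^4*c^8*u^2 + 2*a^4*b^4*c^8*u^6*e^2 + 2*a^4*b^4*c^8*u^2*e^2 + 1*a^4*b^4*c^8*u^4*s^2 + 1*a^4*b^4*c^8*s^2 + (-1)*a^4*b^4*c^8*u^6 + 1*a^4*b^4*c^8) * hs2 + (6*a^4*b^4*c^4*u^2*s^2*e^2 + 4*a^4*b^4*c^2*u*s*w*e + 1*a^4*b^4*w^2 + 2*a^4*b^4*c^4*s^4 + 4*a^4*b^6*c^2*s^2 + 2*a^4*b^8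 + (-4)*a^6*b^4*c^2*s^2 + 1*a^8*b^4 + (-2)*a^6*b^6 + (-1)*a^4*b^4*c^4*u^2) * hw2 + ((-8)*a^4*b^4*c^4*u^3*s*w*e + 4*a^4*b^6*c^2*u*s*w*e + (-4)*a^6*b^4*c^2*u*s*w*e + 3*a^8*b^6 + (-3)*a^6*b^8 + (-4)*a^4*b^6*c^4*u^4 + (-1)*a^10*b^4 + 4*a^6*b^4*c^4*u^4 + 4*a^4*b^4*c^4*u*s*w*e + (-1)*a^4*b^8*c^2 + 3*a^8*b^4*c^2 + (-6)*a^6*b^6*c^2 + 4*a^4*b^4*c^6*u^6 + (-4)*a^4*b^4*c^6*u^2 + 1*a^4*b^4*c^6 + 1*a^4*b^10 + (-4)*a^6*b^4*c^4*u^2 + 4*a^4*b^6*c^4*u^2 + 1*a^6*b^4*c^4 + (-1)*a^4*b^6*c^4 + (-4)*a^8*b^4*c^2*u^2 + 8*a^6*b^6*c^2*u^2) * hc2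

/-- Midpoint of two points of the plane. -/
noncomputable def mid' (p q : ℝ × ℝ) : ℝ × ℝ := ((p.1 + q.1)/2, (p.2 + q.2)/2)

/-- Each midpoint of a side of the self-intersected 4-periodic lies on the quartic
`c²(b²x² + a²y²)² − b⁴a²((a² − 2b²)x² − a²y²) = 0`. -/
theorem midpoints_on_quartic
    (a b c u : ℝ) (hab : a > b) (hb : b > 0) (h2 : a^2 > 2*b^2)
    (hc : c > 0) (hc2 : c^2 = a^2 - b^2)
    (hu : |u| ≤ (a / c^2) * Real.sqrt (a^2 - 2*b^2)) :
    let s := Real.sqrt (1 - u^2)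
    let w := Real.sqrt (a^2*(a^2 - 2*b^2) - c^4*u^2)
    let P1 : ℝ × ℝ := (a*u, b*s)
    let P3 : ℝ × ℝ := (-(a*u), b*s)
    let P2 : ℝ × ℝ := (-((a/(c^2*s))*w), -(b^3/(c^2*s)))
    let P4 : ℝ × ℝ := ((a/(c^2*s))*w, -(b^3/(c^2*s)))
    let F : ℝ × ℝ → ℝ := fun p =>
      c^2*(b^2*p.1^2 + a^2*p.2^2)^2 - b^4*a^2*((a^2 - 2*b^2)*p.1^2 - a^2*p.2^2)
    F (mid' P1 P2) = 0 ∧ F (mid' P2 P3) = 0 ∧ F (mid' P3 P4) = 0 ∧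
      F (mid' P4 P1) = 0 := by
  intro s w P1 P3 P2 P4 F
  have ha : (0:ℝ) < a := lt_trans hb hab
  have hcne : c ≠ 0 := ne_of_gt hc
  have hA : (0:ℝ) < a^2 - 2*b^2 := by linarith
  have hsA : Real.sqrt (a^2 - 2*b^2) ^ 2 = a^2 - 2*b^2 := Real.sq_sqrt hA.le
  have hc2pos : (0:ℝ) < c^2 := by positivity
  -- c^4 * u^2 ≤ a^2 * (a^2 - 2*b^2)
  have hcu : c^2 * |u| ≤ a * Real.sqrt (a^2 - 2*b^2) := by
    have := mul_le_mul_of_nonneg_left hu hc2pos.le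
    calc c^2 * |u| ≤ c^2 * ((a / c^2) * Real.sqrt (a^2 - 2*b^2)) := this
      _ = a * Real.sqrt (a^2 - 2*b^2) := by field_simp
  have hw_nonneg : (0:ℝ) ≤ a^2*(a^2 - 2*b^2) - c^4*u^2 := by
    have h1 : (c^2 * |u|)^2 ≤ (a * Real.sqrt (a^2 - 2*b^2))^2 := by
      apply sq_le_sq' _ hcu
      have : (0:ℝ) ≤ c^2 * |u| := by positivity
      nlinarith [Real.sqrt_nonneg (a^2 - 2*b^2)]
    have h2' : c^4 * u^2 ≤ a^2 * (a^2 - 2*b^2) := by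
      have := h1
      rw [mul_pow, mul_pow, hsA, sq_abs] at this
      nlinarith [pow_pos hb 4]
    linarith
  have hb4 : a^2*(a^2 - 2*b^2) < c^4 := by
    have : c^4 = (a^2 - b^2)^2 := by rw [← hc2]; ring
    nlinarith [pow_pos hb 4]
  have hu1 : u^2 < 1 := by
    have h3 : c^4 * u^2 < c^4 * 1 := by nlinarith
    have hc4 : (0:ℝ) < c^4 := by positivity
    exact lt_of_mul_lt_mul_left h3 hc4.le
  have hs_pos : 0 < s := Real.sqrt_pos.mpr (by linarith)
  have hs : s ≠ 0 := ne_of_gt hs_pos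
  have hs2 : s^2 = 1 - u^2 := Real.sq_sqrt (by linarith)
  have hw2 : w^2 = a^2*(a^2 - 2*b^2) - c^4*u^2 := Real.sq_sqrt hw_nonneg
  refine ⟨?_, ?_, ?_, ?_⟩
  · have h := key a b c u s w (-1) (((-1)*(a*u) + (a/(c^2*s))*w)/2)
      ((b*s + -(b^3/(c^2*s)))/2) hs hcne hs2 hw2 hc2 (by norm_num) rfl rfl
    simp only [F, mid', P1, P2]
    linear_combination h
  · have h := key a b c u s w 1 ((1*(a*u) + (a/(c^2*s))*w)/2)
      ((b*s + -(b^3/(c^2*s)))/2) hs hcne hs2 hw2 hc2 (by norm_num) rfl rfl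
    simp only [F, mid', P2, P3]
    linear_combination h
  · have h := key a b c u s w (-1) (((-1)*(a*u) + (a/(c^2*s))*w)/2)
      ((b*s + -(b^3/(c^2*s)))/2) hs hcne hs2 hw2 hc2 (by norm_num) rfl rfl
    simp only [F, mid', P3, P4]
    linear_combination h
  · have h := key a b c u s w 1 ((1*(a*u) + (a/(c^2*s))*w)/2)
      ((b*s + -(b^3/(c^2*s)))/2) hs hcne hs2 hw2 hc2 (by norm_num) rfl rfl
    simp only [F, mid', P4, P1]
    linear_combination h
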